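/- Let m ≥ 2 and partition ℝ^m into half-open cubes U_k = ∏_{i=1}^m [2πk_i, 2π(k_i+1)) for k ∈ ℤ^m. Let ℤ₀^m = {k ∈ ℤ^m : k_1 = 0}. Then any line ℓ in ℝ^m with direction vector (1,1,…,1) intersects at most m of the cubes { U_k : k ∈ ℤ₀^m }. -/

import Mathlib

open Real

theorem stmt_8 (m : ℕ) (hm : 2 ≤ m) (x : Fin m → ℝ) :
    let S : Set (Fin m → ℤ) := {k | k ⟨0, by omega⟩ = 0 ∧
      ∃ t : ℝ, ∀ i, x i + t ∈ Set.Ico (2 * Real.pi * k i) (2 * Real.pi * (k i + 1))}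
    S.Finite ∧ S.ncard ≤ m := by
  intro S
  have hpi : (0:ℝ) < 2 * Real.pi := by positivity
  set i0 : Fin m := ⟨0, by omega⟩ with hi0
  -- every k with a witness t is given by floors
  have hki : ∀ (k : Fin m → ℤ) (t : ℝ),
      (∀ i, x i + t ∈ Set.Ico (2 * Real.pi * k i) (2 * Real.pi * (k i + 1))) →
      ∀ i, k i = ⌊(x i + t) / (2 * Real.pi)⌋ := by
    intro k t h i
    obtain ⟨h1, h2⟩ := h i
    symm
    rw [Int.floor_eq_iff]
    constructor
    · rw [le_div_iff₀ hpi]; linarith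
    · rw [div_lt_iff₀ hpi]; push_cast; push_cast at h2; linarith
  set a : Fin m → ℤ := fun i => ⌊(x i - x i0) / (2 * Real.pi)⌋ with ha
  -- range of t
  have ht : ∀ (k : Fin m → ℤ) (t : ℝ), k ∈ S →
      (∀ i, x i + t ∈ Set.Ico (2 * Real.pi * k i) (2 * Real.pi * (k i + 1))) →
      -(x i0) ≤ t ∧ t < 2 * Real.pi - x i0 := by
    intro k t hk h
    obtain ⟨h1, h2⟩ := h i0
    rw [hk.1] at h1 h2
    push_cast at h1 h2
    constructor <;> linarith
  -- bounds on k i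
  have hbound : ∀ (k : Fin m → ℤ) (t : ℝ), k ∈ S →
      (∀ i, x i + t ∈ Set.Ico (2 * Real.pi * k i) (2 * Real.pi * (k i + 1))) →
      ∀ i, a i ≤ k i ∧ k i ≤ a i + 1 := by
    intro k t hk h i
    obtain ⟨ht1, ht2⟩ := ht k t hk h
    rw [hki k t h i]
    constructor
    · apply Int.floor_le_floor
      gcongr
      linarith
    · have : (x i + t) / (2 * Real.pi) < (x i - x i0) / (2 * Real.pi) + 1 := by
        rw [div_add' _ _ _ (ne_of_gt hpi), div_lt_div_iff₀ hpi hpi]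
        nlinarith
      calc ⌊(x i + t) / (2 * Real.pi)⌋ ≤ ⌊(x i - x i0) / (2 * Real.pi) + 1⌋ :=
            Int.floor_le_floor this.le
        _ = a i + 1 := by rw [Int.floor_add_one]
  -- monotone comparison
  have hmono : ∀ (k k' : Fin m → ℤ) (t t' : ℝ),
      (∀ i, x i + t ∈ Set.Ico (2 * Real.pi * k i) (2 * Real.pi * (k i + 1))) →
      (∀ i, x i + t' ∈ Set.Ico (2 * Real.pi * k' i) (2 * Real.pi * (k' i + 1))) →
      t ≤ t' → ∀ i, k i ≤ k' i := by
    intro k k' t t' h h' htt i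
    rw [hki k t h i, hki k' t' h' i]
    apply Int.floor_le_floor
    gcongr
  -- the sum function
  set s : (Fin m → ℤ) → ℤ := fun k => ∑ i, (k i - a i) with hs
  -- s is injective on S
  have hinj : Set.InjOn s S := by
    intro k hk k' hk' hss
    obtain ⟨hk0, t, hkt⟩ := hk
    obtain ⟨hk0', t', hkt'⟩ := hk'
    rcases le_total t t' with htt | htt
    · have hle : ∀ i, k i ≤ k' i := hmono k k' t t' hkt hkt' htt
      have : ∑ i, (k' i - k i) = 0 := by
        calc ∑ i, (k' i - k i) = ∑ i, ((k' i - a i) - (k i - a i)) := by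
              apply Finset.sum_congr rfl; intros; ring
          _ = (∑ i, (k' i - a i)) - ∑ i, (k i - a i) := Finset.sum_sub_distrib _ _
          _ = s k' - s k := rfl
          _ = 0 := by rw [hss]; ring
      funext i
      have := (Finset.sum_eq_zero_iff_of_nonneg (fun i _ => by
        simpa using hle i)).mp this i (Finset.mem_univ i)
      omega
    · have hle : ∀ i, k' i ≤ k i := hmono k' k t' t hkt' hkt htt
      have : ∑ i, (k i - k' i) = 0 := by
        calc ∑ i, (k i - k' i) = ∑ i, ((k i - a i) - (k' i - a i)) := by
              apply Finset.sum_congr rfl; intros; ring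
          _ = (∑ i, (k i - a i)) - ∑ i, (k' i - a i) := Finset.sum_sub_distrib _ _
          _ = s k - s k' := rfl
          _ = 0 := by rw [hss]; ring
      funext i
      have := (Finset.sum_eq_zero_iff_of_nonneg (fun i _ => by
        simpa using hle i)).mp this i (Finset.mem_univ i)
      omega
  -- s maps S into Icc 0 (m-1)
  have hai0 : a i0 = 0 := by
    simp only [ha, sub_self, zero_div, Int.floor_zero]
  have hmaps : ∀ k ∈ S, s k ∈ Set.Icc (0:ℤ) (m - 1) := by
    intro k hk
    obtain ⟨hk0, t, hkt⟩ := hk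
    have hb := hbound k t ⟨hk0, t, hkt⟩ hkt
    constructor
    · apply Finset.sum_nonneg
      intro i _
      have := (hb i).1; omega
    · have hterm0 : k i0 - a i0 = 0 := by rw [hk0, hai0]; ring
      calc s k = ∑ i ∈ Finset.univ.erase i0, (k i - a i) := by
            simp only [hs]
            rw [← Finset.add_sum_erase _ _ (Finset.mem_univ i0), hterm0, zero_add]
        _ ≤ ∑ i ∈ Finset.univ.erase i0, 1 := by
            apply Finset.sum_le_sum
            intro i _
            have := (hb i).2; omega
        _ = (m : ℤ) - 1 := by
            rw [Finset.sum_const, Finset.card_erase_of_mem (Finset.mem_univ i0)]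
            simp
            omega
  -- conclude
  have himg : s '' S ⊆ Set.Icc (0:ℤ) (m - 1) := by
    rintro _ ⟨k, hk, rfl⟩; exact hmaps k hk
  have hIccfin : (Set.Icc (0:ℤ) (m - 1)).Finite := Set.finite_Icc _ _
  have hfin : S.Finite := Set.Finite.of_finite_image (hIccfin.subset himg) hinj
  refine ⟨hfin, ?_⟩
  have h1 : S.ncard = (s '' S).ncard := (Set.ncard_image_of_injOn hinj).symm
  have h2 : (s '' S).ncard ≤ (Set.Icc (0:ℤ) (m - 1)).ncard :=
    Set.ncard_le_ncard himg hIccfin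
  have h3 : (Set.Icc (0:ℤ) (m - 1)).ncard = m := by
    rw [← Finset.coe_Icc, Set.ncard_coe_finset, Int.card_Icc]
    omega
  omega
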